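/- Isolation of an interleaved pair of loops: for all lists A, B, C, D, E over L and all loop labels s, t : β, the cyclic words A ++ [s⁺] ++ B ++ [t⁺] ++ C ++ [s⁻] ++ D ++ [t⁻] ++ E and A ++ D ++ C ++ B ++ E ++ [s⁺, t⁺, s⁻, t⁻] are mutation-equivalent, i.e. R (A ++ [s⁺] ++ B ++ [t⁺] ++ C ++ [s⁻] ++ D ++ [t⁻] ++ E) (A ++ D ++ C ++ B ++ E ++ [s⁺, t⁺, s⁻, t⁻]). -/

import Mathlib

/-- One-step moves on cyclic words over the letter type `α ⊕ β × Bool`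
(`α` = outer letters, `β` = loop labels, `Sum.inr (t, true)` = `t⁺`,
`Sum.inr (t, false)` = `t⁻`): rotation and the basic mutation. -/
def MutStep (α β : Type*) : List (α ⊕ β × Bool) → List (α ⊕ β × Bool) → Prop :=
  fun w₁ w₂ =>
    (∃ (x : α ⊕ β × Bool) (w : List (α ⊕ β × Bool)), w₁ = x :: w ∧ w₂ = w ++ [x]) ∨
    (∃ (t : β) (A B C D : List (α ⊕ β × Bool)),
      w₁ = A ++ [Sum.inr (t, true)] ++ B ++ C ++ [Sum.inr (t, false)] ++ D ∧
      w₂ = D ++ [Sum.inr (t, true)] ++ C ++ B ++ [Sum.inr (t, false)] ++ A)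

/-- Mutation equivalence of cyclic words: the smallest equivalence relation
(reflexive–symmetric–transitive closure) containing the one-step moves. -/
def MutEquiv (α β : Type*) : List (α ⊕ β × Bool) → List (α ⊕ β × Bool) → Prop :=
  Relation.EqvGen (MutStep α β)

theorem mutEquiv_trans {α β : Type*} {a b c : List (α ⊕ β × Bool)}
    (h1 : MutEquiv α β a b) (h2 : MutEquiv α β b c) : MutEquiv α β a c :=
  Relation.EqvGen.trans _ _ _ h1 h2

/-- Rotation by one letter. -/
theorem mutEquiv_rot1 {α β : Type*} (x : α ⊕ β × Bool) (w : List (α ⊕ β × Bool)) :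
    MutEquiv α β (x :: w) (w ++ [x]) :=
  Relation.EqvGen.rel _ _ (Or.inl ⟨x, w, rfl, rfl⟩)

/-- Arbitrary rotation. -/
theorem mutEquiv_rot {α β : Type*} (u v : List (α ⊕ β × Bool)) :
    MutEquiv α β (u ++ v) (v ++ u) := by
  induction u generalizing v with
  | nil => simp only [List.nil_append, List.append_nil]; exact Relation.EqvGen.refl v
  | cons x u ih =>
    have h1 : MutEquiv α β (x :: (u ++ v)) ((u ++ v) ++ [x]) := mutEquiv_rot1 x (u ++ v)
    have h2 : MutEquiv α β (u ++ (v ++ [x])) ((v ++ [x]) ++ u) := ih (v ++ [x])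
    have := mutEquiv_trans (by simpa using h1) (by simpa using h2)
    simpa using this

/-- The basic mutation as a `MutEquiv`. -/
theorem mutEquiv_mut {α β : Type*} (t : β) (X B C D : List (α ⊕ β × Bool)) :
    MutEquiv α β (X ++ [Sum.inr (t, true)] ++ B ++ C ++ [Sum.inr (t, false)] ++ D)
      (D ++ [Sum.inr (t, true)] ++ C ++ B ++ [Sum.inr (t, false)] ++ X) :=
  Relation.EqvGen.rel _ _ (Or.inr ⟨t, X, B, C, D, rfl, rfl⟩)

/-- Isolation of an interleaved pair of loops:
`(A s⁺ B t⁺ C s⁻ D t⁻ E)` is mutation-equivalent to `(A D C B E s⁺ t⁺ s⁻ t⁻)`. -/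
theorem mut_isolate_interleaved {α β : Type*}
    (A B C D E : List (α ⊕ β × Bool)) (s t : β) :
    MutEquiv α β
      (A ++ [Sum.inr (s, true)] ++ B ++ [Sum.inr (t, true)] ++ C ++ [Sum.inr (s, false)]
        ++ D ++ [Sum.inr (t, false)] ++ E)
      (A ++ D ++ C ++ B ++ E ++
        [Sum.inr (s, true), Sum.inr (t, true), Sum.inr (s, false), Sum.inr (t, false)]) := by
  set sp := [Sum.inr (s, true)] with hsp
  set sm := [Sum.inr (s, false)] with hsm
  set tp := [Sum.inr (t, true)] with htp
  set tm := [Sum.inr (t, false)] with htm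
  -- W0 = A sp B tp C sm D tm E
  -- rotate to W1 = E A sp B tp C sm D tm
  have h1 : MutEquiv α β (A ++ sp ++ B ++ tp ++ C ++ sm ++ D ++ tm ++ E)
      (E ++ A ++ sp ++ B ++ tp ++ C ++ sm ++ D ++ tm) := by
    have := mutEquiv_rot (α := α) (β := β) (A ++ sp ++ B ++ tp ++ C ++ sm ++ D ++ tm) E
    simpa [List.append_assoc] using this
  -- s-mutation: X = E++A, B' = [], C' = B++tp++C, D' = D++tm
  have h2 : MutEquiv α β (E ++ A ++ sp ++ B ++ tp ++ C ++ sm ++ D ++ tm)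
      (D ++ tm ++ sp ++ B ++ tp ++ C ++ sm ++ E ++ A) := by
    have := mutEquiv_mut s (E ++ A) ([] : List (α ⊕ β × Bool)) (B ++ tp ++ C) (D ++ tm)
    simpa [List.append_assoc, hsp, hsm] using this
  -- rotate to W2' = sp B tp C sm E A D tm
  have h3 : MutEquiv α β (D ++ tm ++ sp ++ B ++ tp ++ C ++ sm ++ E ++ A)
      (sp ++ B ++ tp ++ C ++ sm ++ E ++ A ++ D ++ tm) := by
    have := mutEquiv_rot (α := α) (β := β) (D ++ tm) (sp ++ B ++ tp ++ C ++ sm ++ E ++ A)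
    simpa [List.append_assoc] using this
  -- t-mutation: X = sp++B, B' = C++sm++E, C' = A++D, D' = []
  have h4 : MutEquiv α β (sp ++ B ++ tp ++ C ++ sm ++ E ++ A ++ D ++ tm)
      (tp ++ A ++ D ++ C ++ sm ++ E ++ tm ++ sp ++ B) := by
    have := mutEquiv_mut t (sp ++ B) (C ++ sm ++ E) (A ++ D) ([] : List (α ⊕ β × Bool))
    simpa [List.append_assoc, htp, htm] using this
  -- rotate to W3' = tm sp B tp A D C sm E
  have h5 : MutEquiv α β (tp ++ A ++ D ++ C ++ sm ++ E ++ tm ++ sp ++ B)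
      (tm ++ sp ++ B ++ tp ++ A ++ D ++ C ++ sm ++ E) := by
    have := mutEquiv_rot (α := α) (β := β) (tp ++ A ++ D ++ C ++ sm ++ E) (tm ++ sp ++ B)
    simpa [List.append_assoc] using this
  -- s-mutation: X = tm, B' = B++tp, C' = A++D++C, D' = E
  have h6 : MutEquiv α β (tm ++ sp ++ B ++ tp ++ A ++ D ++ C ++ sm ++ E)
      (E ++ sp ++ A ++ D ++ C ++ B ++ tp ++ sm ++ tm) := by
    have := mutEquiv_mut s tm (B ++ tp) (A ++ D ++ C) E
    simpa [List.append_assoc, hsp, hsm] using this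
  -- rotate to W4' = A D C B tp sm tm E sp
  have h7 : MutEquiv α β (E ++ sp ++ A ++ D ++ C ++ B ++ tp ++ sm ++ tm)
      (A ++ D ++ C ++ B ++ tp ++ sm ++ tm ++ E ++ sp) := by
    have := mutEquiv_rot (α := α) (β := β) (E ++ sp) (A ++ D ++ C ++ B ++ tp ++ sm ++ tm)
    simpa [List.append_assoc] using this
  -- t-mutation: X = A++D++C++B, B' = [], C' = sm, D' = E++sp
  have h8 : MutEquiv α β (A ++ D ++ C ++ B ++ tp ++ sm ++ tm ++ E ++ sp)
      (E ++ sp ++ tp ++ sm ++ tm ++ A ++ D ++ C ++ B) := by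
    have := mutEquiv_mut t (A ++ D ++ C ++ B) ([] : List (α ⊕ β × Bool)) sm (E ++ sp)
    simpa [List.append_assoc, htp, htm] using this
  -- final rotation
  have h9 : MutEquiv α β (E ++ sp ++ tp ++ sm ++ tm ++ A ++ D ++ C ++ B)
      (A ++ D ++ C ++ B ++ E ++ sp ++ tp ++ sm ++ tm) := by
    have := mutEquiv_rot (α := α) (β := β) (E ++ sp ++ tp ++ sm ++ tm) (A ++ D ++ C ++ B)
    simpa [List.append_assoc] using this
  have main := mutEquiv_trans h1 (mutEquiv_trans h2 (mutEquiv_trans h3 (mutEquiv_trans h4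
    (mutEquiv_trans h5 (mutEquiv_trans h6 (mutEquiv_trans h7 (mutEquiv_trans h8 h9)))))))
  simpa [List.append_assoc, hsp, hsm, htp, htm] using main
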